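/- Let w ∈ S_n avoid 3412 and 4231, and let s be a simple transposition with sw < w < ws. If ws contains the pattern 4231 or 3412 (i.e., ws is singular), then there is no permutation z with z ≤ w, ℓ(z) = ℓ(w) − 1, and zs < z. -/

import Mathlib

open Equiv

/-- `rk w i j` = #{k ≤ i : w(k) ≤ j} (1-indexed), for `w ∈ S_n`. -/
def rk {n : ℕ} (w : Equiv.Perm (Fin n)) (i j : ℕ) : ℕ :=
  (Finset.univ.filter (fun k : Fin n => (k : ℕ) + 1 ≤ i ∧ (w k : ℕ) + 1 ≤ j)).card

/-- Bruhat order on `S_n` via the rank-matrix criterion: `z ≤ w` iff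
`r_{i,j}(z) ≥ r_{i,j}(w)` for all `i,j`. -/
def BruhatLE {n : ℕ} (z w : Equiv.Perm (Fin n)) : Prop :=
  ∀ i ≤ n, ∀ j ≤ n, rk w i j ≤ rk z i j

def BruhatLT {n : ℕ} (z w : Equiv.Perm (Fin n)) : Prop :=
  BruhatLE z w ∧ z ≠ w

/-- Coxeter length = number of inversions. -/
def len {n : ℕ} (w : Equiv.Perm (Fin n)) : ℕ :=
  (Finset.univ.filter (fun p : Fin n × Fin n => p.1 < p.2 ∧ w p.2 < w p.1)).card

/-- One-line notation of `w`, 1-indexed, extended by the identity outside `[1,n]`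
(so that `w(n+1) = n+1`). -/
def ol {n : ℕ} (w : Equiv.Perm (Fin n)) (k : ℕ) : ℕ :=
  if h : 1 ≤ k ∧ k ≤ n then ((w ⟨k - 1, by omega⟩ : Fin n) : ℕ) + 1 else k

/-- The coessential set of `w` (1-indexed pairs). -/
def Coess {n : ℕ} (w : Equiv.Perm (Fin n)) : Set (ℕ × ℕ) :=
  {p | 1 ≤ p.1 ∧ p.1 ≤ n ∧ 1 ≤ p.2 ∧ p.2 ≤ n ∧
    ol w p.1 ≤ p.2 ∧ p.2 < ol w (p.1 + 1) ∧
    ol w⁻¹ p.2 ≤ p.1 ∧ p.1 < ol w⁻¹ (p.2 + 1)}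

/-- `w` contains the pattern 312. -/
def Has312 {n : ℕ} (w : Equiv.Perm (Fin n)) : Prop :=
  ∃ a b c : Fin n, a < b ∧ b < c ∧ w b < w c ∧ w c < w a

/-- `w` contains the pattern 3412. -/
def Has3412 {n : ℕ} (w : Equiv.Perm (Fin n)) : Prop :=
  ∃ a b c d : Fin n, a < b ∧ b < c ∧ c < d ∧ w c < w d ∧ w d < w a ∧ w a < w b

/-- `w` contains the pattern 4231. -/
def Has4231 {n : ℕ} (w : Equiv.Perm (Fin n)) : Prop :=
  ∃ a b c d : Fin n, a < b ∧ b < c ∧ c < d ∧ w d < w b ∧ w b < w c ∧ w c < w a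

/-- `w` is smooth iff it avoids 3412 and 4231. -/
def SmoothPerm {n : ℕ} (w : Equiv.Perm (Fin n)) : Prop := ¬ Has3412 w ∧ ¬ Has4231 w

/-- `w` is codominant iff `i ≤ j` for every `(i,j)` in the coessential set. -/
def Codominant {n : ℕ} (w : Equiv.Perm (Fin n)) : Prop :=
  ∀ p ∈ Coess w, p.1 ≤ p.2

/-- Lexicographic comparison on one-line notations. -/
def LexLe {n : ℕ} (u w : Equiv.Perm (Fin n)) : Prop :=
  u = w ∨ ∃ i : Fin n, (∀ j < i, u j = w j) ∧ u i < w i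

/-- `m` is a Hessenberg function (0-indexed): non-decreasing and `m i ≥ i`. -/
def Hess {n : ℕ} (m : Fin n → Fin n) : Prop :=
  Monotone m ∧ ∀ i, i ≤ m i

/-- `w` is the lexicographically greatest permutation with `w i ≤ m i` for all `i`. -/
def IsLexMax {n : ℕ} (m : Fin n → Fin n) (w : Equiv.Perm (Fin n)) : Prop :=
  (∀ i, w i ≤ m i) ∧ ∀ u : Equiv.Perm (Fin n), (∀ i, u i ≤ m i) → LexLe u w

instance {n : ℕ} (z w : Equiv.Perm (Fin n)) : Decidable (BruhatLE z w) := by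
  unfold BruhatLE; exact Nat.decidableBallLE _ _





section helpers

variable {n : ℕ}

lemma rk_sum (w : Perm (Fin n)) (a b : ℕ) :
    rk w a b = ∑ k : Fin n, if (k:ℕ) < a ∧ (w k:ℕ) < b then 1 else 0 := by
  rw [rk, Finset.card_filter]
  simp only [Nat.add_one_le_iff]

lemma rk_split (u : Perm (Fin n)) (i₀ : Fin n) (a b : ℕ) (h : (i₀:ℕ) < a) :
    rk u a b = rk u i₀ b + (if (u i₀:ℕ) < b then 1 else 0)
      + (Finset.univ.filter fun k : Fin n => (i₀:ℕ) < k ∧ (k:ℕ) < a ∧ (u k:ℕ) < b).card := by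
  rw [rk_sum, rk_sum, Finset.card_filter]
  have h2 : (if (u i₀:ℕ) < b then 1 else 0)
      = ∑ k : Fin n, if k = i₀ then (if (u k:ℕ) < b then 1 else 0) else 0 := by
    rw [Finset.sum_ite_eq' Finset.univ i₀ (fun k => if (u k:ℕ) < b then 1 else 0)]
    simp
  rw [h2, ← Finset.sum_add_distrib, ← Finset.sum_add_distrib]
  refine Finset.sum_congr rfl (fun k _ => ?_)
  rcases eq_or_ne k i₀ with rfl | hk
  · simp only [if_pos rfl]
    split_ifs <;> omega
  · have hv : (k:ℕ) ≠ (i₀:ℕ) := fun hh => hk (Fin.val_injective hh)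
    simp only [if_neg hk]
    split_ifs <;> omega

lemma rk_agree (z w : Perm (Fin n)) (i₀ : Fin n) (b : ℕ)
    (h : ∀ k : Fin n, (k:ℕ) < (i₀:ℕ) → z k = w k) :
    rk z i₀ b = rk w i₀ b := by
  unfold rk
  congr 1
  apply Finset.filter_congr
  intro k _
  simp only [Nat.add_one_le_iff]
  constructor
  · rintro ⟨h1, h2⟩; exact ⟨h1, by rw [← h k h1]; exact h2⟩
  · rintro ⟨h1, h2⟩; exact ⟨h1, by rw [h k h1]; exact h2⟩

lemma rk_swap (w : Perm (Fin n)) (i j : Fin n) (hij : (i:ℕ) < j) (hw : (w j:ℕ) < w i)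
    (a b : ℕ) :
    rk (w * Equiv.swap i j) a b
      = rk w a b + (if (i:ℕ) < a ∧ a ≤ (j:ℕ) ∧ (w j:ℕ) < b ∧ b ≤ (w i:ℕ) then 1 else 0) := by
  have hne : i ≠ j := fun h => by rw [h] at hij; omega
  rw [rk_sum, rk_sum]
  have reidx : (∑ k : Fin n, if (k:ℕ) < a ∧ ((w * Equiv.swap i j) k:ℕ) < b then 1 else 0)
      = ∑ k : Fin n, if ((Equiv.swap i j k : Fin n):ℕ) < a ∧ (w k:ℕ) < b then 1 else 0 := by
    apply Fintype.sum_equiv (Equiv.swap i j)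
    intro x
    simp [Equiv.Perm.mul_apply, Equiv.swap_apply_self]
    exact if_congr Iff.rfl rfl rfl
  rw [reidx]
  set F : Fin n → ℕ := fun k => if ((Equiv.swap i j k : Fin n):ℕ) < a ∧ (w k:ℕ) < b then 1 else 0 with hF
  set G : Fin n → ℕ := fun k => if (k:ℕ) < a ∧ (w k:ℕ) < b then 1 else 0 with hG
  have hjmem : j ∈ Finset.univ.erase i := Finset.mem_erase.mpr ⟨hne.symm, Finset.mem_univ j⟩
  have hsplit : ∀ H : Fin n → ℕ, ∑ k : Fin n, H k
      = H i + (H j + ∑ k ∈ (Finset.univ.erase i).erase j, H k) := by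
    intro H
    rw [Finset.add_sum_erase _ H hjmem, Finset.add_sum_erase _ H (Finset.mem_univ i)]
  rw [hsplit F, hsplit G]
  have htail : ∑ k ∈ (Finset.univ.erase i).erase j, F k
      = ∑ k ∈ (Finset.univ.erase i).erase j, G k := by
    refine Finset.sum_congr rfl (fun k hk => ?_)
    have hk1 : k ≠ j := (Finset.mem_erase.mp hk).1
    have hk2 : k ≠ i := (Finset.mem_erase.mp (Finset.mem_erase.mp hk).2).1
    simp [hF, hG, Equiv.swap_apply_of_ne_of_ne hk2 hk1]
  rw [htail]
  have hFi : F i = if (j:ℕ) < a ∧ (w i:ℕ) < b then 1 else 0 := by simp [hF]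
  have hFj : F j = if (i:ℕ) < a ∧ (w j:ℕ) < b then 1 else 0 := by simp [hF]
  have hGi : G i = if (i:ℕ) < a ∧ (w i:ℕ) < b then 1 else 0 := by simp [hG]
  have hGj : G j = if (j:ℕ) < a ∧ (w j:ℕ) < b then 1 else 0 := by simp [hG]
  rw [hFi, hFj, hGi, hGj]
  split_ifs <;> omega



variable {n : ℕ}

def Invset (w : Perm (Fin n)) : Finset (Fin n × Fin n) :=
  Finset.univ.filter (fun p : Fin n × Fin n => p.1 < p.2 ∧ w p.2 < w p.1)

lemma len_eq (w : Perm (Fin n)) : len w = (Invset w).card := rfl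

lemma mem_Invset {w : Perm (Fin n)} {x y : Fin n} :
    (x, y) ∈ Invset w ↔ (x:ℕ) < y ∧ (w y:ℕ) < w x := by
  unfold Invset
  rw [Finset.mem_filter]
  simp only [Finset.mem_univ, true_and, Fin.lt_def]

def gswap (i j : Fin n) (q : Fin n × Fin n) : Fin n × Fin n :=
  if (Equiv.swap i j q.1 : Fin n) < Equiv.swap i j q.2
  then (Equiv.swap i j q.1, Equiv.swap i j q.2) else q

lemma gswap_invol (i j : Fin n) (q : Fin n × Fin n) (h : q.1 < q.2) :
    gswap i j (gswap i j q) = q := by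
  unfold gswap
  by_cases h1 : (Equiv.swap i j q.1 : Fin n) < Equiv.swap i j q.2
  · rw [if_pos h1]
    dsimp only
    simp only [Equiv.swap_apply_self]
    rw [if_pos h]
  · rw [if_neg h1, if_neg h1]

lemma val_swap (l l' t : Fin n) :
    ((Equiv.swap l l' t : Fin n):ℕ) = if t = l then (l':ℕ) else if t = l' then (l:ℕ) else t := by
  rw [Equiv.swap_apply_def]
  split_ifs <;> rfl

lemma fin_ne_val {x y : Fin n} (h : x ≠ y) : (x:ℕ) ≠ (y:ℕ) :=
  fun hh => h (Fin.val_injective hh)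

lemma gswap_mem {w : Perm (Fin n)} {i j : Fin n} (hij : (i:ℕ) < j) (hw : (w j:ℕ) < w i)
    {x y : Fin n} (hq : (x, y) ∈ Invset (w * Equiv.swap i j)) :
    gswap i j (x, y) ∈ Invset w := by
  rw [mem_Invset] at hq
  obtain ⟨hxy, hv⟩ := hq
  simp only [Equiv.Perm.mul_apply] at hv
  unfold gswap
  dsimp only
  by_cases h1 : (Equiv.swap i j x : Fin n) < Equiv.swap i j y
  · rw [if_pos h1, mem_Invset]
    exact ⟨Fin.lt_def.mp h1, hv⟩
  · rw [if_neg h1, mem_Invset]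
    refine ⟨hxy, ?_⟩
    have hxyne : x ≠ y := fun hh => by rw [hh] at hxy; omega
    have hxy' : ((Equiv.swap i j x : Fin n):ℕ) ≠ ((Equiv.swap i j y : Fin n):ℕ) :=
      fin_ne_val (fun hh => hxyne ((Equiv.swap i j).injective hh))
    have h2 : ((Equiv.swap i j y : Fin n):ℕ) < ((Equiv.swap i j x : Fin n):ℕ) := by
      have h3 := Fin.lt_def.not.mp h1
      omega
    rw [val_swap, val_swap] at h2
    by_cases hxi : x = i
    · have ex : Equiv.swap i j x = j := by rw [hxi]; exact Equiv.swap_apply_left i j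
      by_cases hyj : y = j
      · -- (x,y)=(i,j): hv gives w i < w j, contra
        have ey : Equiv.swap i j y = i := by rw [hyj]; exact Equiv.swap_apply_right i j
        rw [ex, ey] at hv; omega
      · by_cases hyi : y = i
        · exact absurd (hxi.trans hyi.symm) hxyne
        · have ey : Equiv.swap i j y = y := Equiv.swap_apply_of_ne_of_ne hyi hyj
          rw [ex, ey] at hv
          rw [hxi]
          omega
    · by_cases hxj : x = j
      · -- x = j, so y > j, swap y = y, h2: y < i, contra
        by_cases hyi : y = i
        · have : (y:ℕ) < (x:ℕ) := by rw [hyi, hxj]; exact hij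
          omega
        · by_cases hyj : y = j
          · exact absurd (hxj.trans hyj.symm) hxyne
          · simp only [if_pos hxj, if_neg hxi, if_neg hyi, if_neg hyj] at h2
            have hxv : (x:ℕ) = (j:ℕ) := by rw [hxj]
            omega
      · have ex : Equiv.swap i j x = x := Equiv.swap_apply_of_ne_of_ne hxi hxj
        by_cases hyi : y = i
        · -- swap y = j: h2: j < x, but x < y = i < j
          simp only [if_neg hxi, if_neg hxj, if_pos hyi] at h2
          have hyv : (y:ℕ) = (i:ℕ) := by rw [hyi]
          omega
        · by_cases hyj : y = j
          · have ey : Equiv.swap i j y = i := by rw [hyj]; exact Equiv.swap_apply_right i j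
            rw [ex, ey] at hv
            rw [hyj]
            omega
          · have ey : Equiv.swap i j y = y := Equiv.swap_apply_of_ne_of_ne hyi hyj
            simp only [if_neg hxi, if_neg hxj, if_neg hyi, if_neg hyj] at h2
            omega

lemma gswap_ne1 {w : Perm (Fin n)} {i j : Fin n} (hij : (i:ℕ) < j) (hw : (w j:ℕ) < w i)
    {x y : Fin n} (hq : (x, y) ∈ Invset (w * Equiv.swap i j)) :
    gswap i j (x, y) ≠ (i, j) := by
  rw [mem_Invset] at hq
  obtain ⟨hxy, hv⟩ := hq
  simp only [Equiv.Perm.mul_apply] at hv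
  unfold gswap
  dsimp only
  intro hcontra
  split_ifs at hcontra with h1
  · have hx : Equiv.swap i j x = i := congrArg Prod.fst hcontra
    have hy : Equiv.swap i j y = j := congrArg Prod.snd hcontra
    have hx' : x = j := by
      have h5 := congrArg (Equiv.swap i j) hx
      rwa [Equiv.swap_apply_self, Equiv.swap_apply_left] at h5
    have hy' : y = i := by
      have h5 := congrArg (Equiv.swap i j) hy
      rwa [Equiv.swap_apply_self, Equiv.swap_apply_right] at h5
    rw [hx', hy'] at hxy
    omega
  · have hx : x = i := congrArg Prod.fst hcontra
    have hy : y = j := congrArg Prod.snd hcontra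
    rw [hx, hy, Equiv.swap_apply_left, Equiv.swap_apply_right] at hv
    omega

lemma gswap_ne2 {w : Perm (Fin n)} {i j k₀ : Fin n} (hij : (i:ℕ) < j) (hw : (w j:ℕ) < w i)
    (hk1 : (i:ℕ) < k₀) (hk2 : (k₀:ℕ) < j) (hk3 : (w j:ℕ) < w k₀)
    {x y : Fin n} (hq : (x, y) ∈ Invset (w * Equiv.swap i j)) :
    gswap i j (x, y) ≠ (i, k₀) := by
  rw [mem_Invset] at hq
  obtain ⟨hxy, hv⟩ := hq
  simp only [Equiv.Perm.mul_apply] at hv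
  have hk₀i : k₀ ≠ i := fun h => by rw [h] at hk1; omega
  have hk₀j : k₀ ≠ j := fun h => by rw [h] at hk2; omega
  unfold gswap
  dsimp only
  intro hcontra
  split_ifs at hcontra with h1
  · have hx : Equiv.swap i j x = i := congrArg Prod.fst hcontra
    have hy : Equiv.swap i j y = k₀ := congrArg Prod.snd hcontra
    have hx' : x = j := by
      have h5 := congrArg (Equiv.swap i j) hx
      rwa [Equiv.swap_apply_self, Equiv.swap_apply_left] at h5
    have hy' : y = k₀ := by
      have h5 := congrArg (Equiv.swap i j) hy
      rwa [Equiv.swap_apply_self, Equiv.swap_apply_of_ne_of_ne hk₀i hk₀j] at h5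
    rw [hx', hy'] at hxy
    omega
  · have hx : x = i := congrArg Prod.fst hcontra
    have hy : y = k₀ := congrArg Prod.snd hcontra
    rw [hx, hy, Equiv.swap_apply_left, Equiv.swap_apply_of_ne_of_ne hk₀i hk₀j] at hv
    omega

lemma len_swap_lt {w : Perm (Fin n)} {i j : Fin n} (hij : (i:ℕ) < j) (hw : (w j:ℕ) < w i) :
    len (w * Equiv.swap i j) < len w := by
  have hmem : (i, j) ∈ Invset w := mem_Invset.mpr ⟨hij, hw⟩
  have hcard : (Invset (w * Equiv.swap i j)).card ≤ ((Invset w).erase (i,j)).card := by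
    apply Finset.card_le_card_of_injOn (gswap i j)
    · intro q hq
      obtain ⟨x, y⟩ := q
      exact Finset.mem_erase.mpr ⟨gswap_ne1 hij hw hq, gswap_mem hij hw hq⟩
    · intro q hq q' hq' heq
      obtain ⟨x, y⟩ := q
      obtain ⟨x', y'⟩ := q'
      have h1 := (mem_Invset.mp hq).1
      have h2 := (mem_Invset.mp hq').1
      have h5 := congrArg (gswap i j) heq
      rwa [gswap_invol i j _ (Fin.lt_def.mpr h1), gswap_invol i j _ (Fin.lt_def.mpr h2)] at h5
  rw [Finset.card_erase_of_mem hmem] at hcard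
  have hpos : 0 < (Invset w).card := Finset.card_pos.mpr ⟨(i,j), hmem⟩
  rw [len_eq, len_eq]
  omega

lemma len_swap_two {w : Perm (Fin n)} {i j k₀ : Fin n} (hij : (i:ℕ) < j) (hw : (w j:ℕ) < w i)
    (hk1 : (i:ℕ) < k₀) (hk2 : (k₀:ℕ) < j) (hk3 : (w j:ℕ) < w k₀) (hk4 : (w k₀:ℕ) < w i) :
    len (w * Equiv.swap i j) + 2 ≤ len w := by
  have hmem : (i, j) ∈ Invset w := mem_Invset.mpr ⟨hij, hw⟩
  have hmem2 : (i, k₀) ∈ (Invset w).erase (i, j) := by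
    refine Finset.mem_erase.mpr ⟨?_, mem_Invset.mpr ⟨hk1, hk4⟩⟩
    intro h
    have h5 : k₀ = j := congrArg Prod.snd h
    rw [h5] at hk2; omega
  have hcard : (Invset (w * Equiv.swap i j)).card
      ≤ (((Invset w).erase (i,j)).erase (i,k₀)).card := by
    apply Finset.card_le_card_of_injOn (gswap i j)
    · intro q hq
      obtain ⟨x, y⟩ := q
      exact Finset.mem_erase.mpr ⟨gswap_ne2 hij hw hk1 hk2 hk3 hq,
        Finset.mem_erase.mpr ⟨gswap_ne1 hij hw hq, gswap_mem hij hw hq⟩⟩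
    · intro q hq q' hq' heq
      obtain ⟨x, y⟩ := q
      obtain ⟨x', y'⟩ := q'
      have h1 := (mem_Invset.mp hq).1
      have h2 := (mem_Invset.mp hq').1
      have h5 := congrArg (gswap i j) heq
      rwa [gswap_invol i j _ (Fin.lt_def.mpr h1), gswap_invol i j _ (Fin.lt_def.mpr h2)] at h5
  rw [Finset.card_erase_of_mem hmem2, Finset.card_erase_of_mem hmem] at hcard
  have hpos : 0 < ((Invset w).erase (i,j)).card := Finset.card_pos.mpr ⟨(i,k₀), hmem2⟩
  rw [Finset.card_erase_of_mem hmem] at hpos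
  rw [len_eq, len_eq]
  omega



lemma reduce {z w : Perm (Fin n)} (hle : BruhatLE z w) (hzw : z ≠ w) :
    ∃ i j : Fin n, (i:ℕ) < j ∧ (w j:ℕ) < w i ∧ BruhatLE z (w * Equiv.swap i j) := by
  classical
  have hDne : (Finset.univ.filter fun k : Fin n => z k ≠ w k).Nonempty := by
    by_contra h
    rw [Finset.not_nonempty_iff_eq_empty, Finset.filter_eq_empty_iff] at h
    exact hzw (Equiv.ext fun k => not_ne_iff.mp (h (Finset.mem_univ k)))
  set i₀ : Fin n := (Finset.univ.filter fun k : Fin n => z k ≠ w k).min' hDne with hi₀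
  have hi₀mem : z i₀ ≠ w i₀ :=
    (Finset.mem_filter.mp (Finset.min'_mem _ hDne)).2
  have hmin : ∀ k : Fin n, (k:ℕ) < (i₀:ℕ) → z k = w k := by
    intro k hk
    by_contra hne
    have hkmem : k ∈ Finset.univ.filter fun k : Fin n => z k ≠ w k := by
      simp only [Finset.mem_filter]
      exact ⟨Finset.mem_univ k, hne⟩
    have h5 := Finset.min'_le _ k hkmem
    rw [Fin.le_def] at h5
    omega
  -- z i₀ < w i₀
  have hzi₀ : (z i₀:ℕ) < (w i₀:ℕ) := by
    have hb := hle ((i₀:ℕ)+1) (by omega) ((w i₀:ℕ)+1) (by have := (w i₀).isLt; omega)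
    rw [rk_split w i₀ _ _ (by omega), rk_split z i₀ _ _ (by omega),
      rk_agree z w i₀ _ hmin] at hb
    have hempty : ∀ u : Perm (Fin n),
        (Finset.univ.filter fun k : Fin n =>
          (i₀:ℕ) < k ∧ (k:ℕ) < (i₀:ℕ)+1 ∧ (u k:ℕ) < (w i₀:ℕ)+1) = ∅ := by
      intro u
      apply Finset.filter_false_of_mem
      intro k _
      omega
    rw [hempty w, hempty z] at hb
    simp only [Finset.card_empty] at hb
    have hne : (z i₀:ℕ) ≠ (w i₀:ℕ) := fin_ne_val hi₀mem
    split_ifs at hb <;> omega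
  -- the set S and its minimum j₀
  have hSne : (Finset.univ.filter fun k : Fin n =>
      (i₀:ℕ) < k ∧ (z i₀:ℕ) ≤ w k ∧ (w k:ℕ) < w i₀).Nonempty := by
    refine ⟨w⁻¹ (z i₀), Finset.mem_filter.mpr ⟨Finset.mem_univ _, ?_, ?_, ?_⟩⟩
    · -- i₀ < w⁻¹ (z i₀)
      have happ : w (w⁻¹ (z i₀)) = z i₀ := w.apply_symm_apply (z i₀)
      rcases lt_trichotomy ((w⁻¹ (z i₀) : Fin n):ℕ) (i₀:ℕ) with h | h | h
      · exfalso
        have h6 : z (w⁻¹ (z i₀)) = w (w⁻¹ (z i₀)) := hmin _ h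
        rw [happ] at h6
        have h7 : w⁻¹ (z i₀) = i₀ := z.injective h6
        rw [h7] at h
        omega
      · exfalso
        have h6 : w⁻¹ (z i₀) = i₀ := Fin.val_injective h
        rw [h6] at happ
        exact hi₀mem (happ.symm) |>.elim
      · exact h
    · rw [Equiv.Perm.coe_inv, Equiv.apply_symm_apply]
    · rw [Equiv.Perm.coe_inv, Equiv.apply_symm_apply]; exact hzi₀
  set j₀ : Fin n := ((Finset.univ.filter fun k : Fin n =>
      (i₀:ℕ) < k ∧ (z i₀:ℕ) ≤ w k ∧ (w k:ℕ) < w i₀).min' hSne) with hj₀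
  have hmem' := Finset.min'_mem _ hSne
  rw [← hj₀] at hmem'
  obtain ⟨-, hj₀1, hj₀2, hj₀3⟩ := Finset.mem_filter.mp hmem'
  have hj₀min : ∀ k : Fin n, (i₀:ℕ) < k → (k:ℕ) < (j₀:ℕ) → (w k:ℕ) < (w i₀:ℕ) →
      (w k:ℕ) < (z i₀:ℕ) := by
    intro k h1 h2 h3
    by_contra h4
    have hkmem : k ∈ Finset.univ.filter fun k : Fin n =>
        (i₀:ℕ) < k ∧ (z i₀:ℕ) ≤ w k ∧ (w k:ℕ) < w i₀ := by
      simp only [Finset.mem_filter]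
      exact ⟨Finset.mem_univ k, h1, by omega, h3⟩
    have h5 := Finset.min'_le _ k hkmem
    rw [← hj₀, Fin.le_def] at h5
    omega
  refine ⟨i₀, j₀, hj₀1, hj₀3, ?_⟩
  intro a ha b hb
  rw [rk_swap w i₀ j₀ hj₀1 hj₀3 a b]
  by_cases hbox : (i₀:ℕ) < a ∧ a ≤ (j₀:ℕ) ∧ (w j₀:ℕ) < b ∧ b ≤ (w i₀:ℕ)
  · rw [if_pos hbox]
    obtain ⟨hb1, hb2, hb3, hb4⟩ := hbox
    -- goal : rk w a b + 1 ≤ rk z a b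
    rw [rk_split w i₀ a b hb1, rk_split z i₀ a b hb1, rk_agree z w i₀ b hmin]
    have hz0 : (z i₀:ℕ) < b := by omega
    rw [if_pos hz0, if_neg (by omega : ¬ (w i₀:ℕ) < b)]
    -- reduce to card comparison
    have hMw : (Finset.univ.filter fun k : Fin n => (i₀:ℕ) < k ∧ (k:ℕ) < a ∧ (w k:ℕ) < b)
        = (Finset.univ.filter fun k : Fin n => (i₀:ℕ) < k ∧ (k:ℕ) < a ∧ (w k:ℕ) < (z i₀:ℕ)) := by
      apply Finset.filter_congr
      intro k _
      constructor
      · rintro ⟨h1, h2, h3⟩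
        exact ⟨h1, h2, hj₀min k h1 (by omega) (by omega)⟩
      · rintro ⟨h1, h2, h3⟩
        exact ⟨h1, h2, by omega⟩
    have hineq := hle a ha (z i₀:ℕ) (by have := (z i₀).isLt; omega)
    rw [rk_split w i₀ a _ hb1, rk_split z i₀ a _ hb1, rk_agree z w i₀ _ hmin,
      if_neg (by omega : ¬ (w i₀:ℕ) < (z i₀:ℕ)), if_neg (by omega : ¬ (z i₀:ℕ) < (z i₀:ℕ))]
      at hineq
    have hsub : (Finset.univ.filter fun k : Fin n =>
          (i₀:ℕ) < k ∧ (k:ℕ) < a ∧ (z k:ℕ) < (z i₀:ℕ)).card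
        ≤ (Finset.univ.filter fun k : Fin n => (i₀:ℕ) < k ∧ (k:ℕ) < a ∧ (z k:ℕ) < b).card := by
      apply Finset.card_le_card
      intro k hk
      simp only [Finset.mem_filter] at hk ⊢
      exact ⟨hk.1, hk.2.1, hk.2.2.1, by omega⟩
    rw [hMw]
    omega
  · rw [if_neg hbox, add_zero]
    exact hle a ha b hb

lemma le_len_aux : ∀ N : ℕ, ∀ w z : Perm (Fin n), len w ≤ N → BruhatLE z w → z ≠ w →
    len z < len w := by
  intro N
  induction N with
  | zero =>
    intro w z hN hle hne
    obtain ⟨i, j, hij, hvw, _⟩ := reduce hle hne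
    have := len_swap_lt hij hvw
    omega
  | succ N ih =>
    intro w z hN hle hne
    obtain ⟨i, j, hij, hvw, hle'⟩ := reduce hle hne
    have hlt := len_swap_lt hij hvw
    by_cases hz : z = w * Equiv.swap i j
    · rw [← hz] at hlt; exact hlt
    · have := ih (w * Equiv.swap i j) z (by omega) hle' hz
      omega

lemma le_len {z w : Perm (Fin n)} (hle : BruhatLE z w) (hne : z ≠ w) : len z < len w :=
  le_len_aux (len w) w z le_rfl hle hne

lemma cover {z w : Perm (Fin n)} (hle : BruhatLE z w) (hlen : len z + 1 = len w) :
    ∃ i j : Fin n, (i:ℕ) < j ∧ (w j:ℕ) < w i ∧ z = w * Equiv.swap i j ∧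
      ∀ k : Fin n, (i:ℕ) < k → (k:ℕ) < j → ¬((w j:ℕ) < w k ∧ (w k:ℕ) < w i) := by
  have hne : z ≠ w := fun h => by rw [h] at hlen; omega
  obtain ⟨i, j, hij, hvw, hle'⟩ := reduce hle hne
  have hlt := len_swap_lt hij hvw
  have hz : z = w * Equiv.swap i j := by
    by_contra hzz
    have := le_len hle' hzz
    omega
  refine ⟨i, j, hij, hvw, hz, ?_⟩
  intro k hk1 hk2 ⟨hk3, hk4⟩
  have := len_swap_two hij hvw hk1 hk2 hk3 hk4
  rw [← hz] at this
  omega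

lemma vne {x y : Fin n} (h : (x:ℕ) ≠ (y:ℕ)) : x ≠ y :=
  fun hh => h (congrArg Fin.val hh)

lemma swap_mono {l l' : Fin n} (hll : (l:ℕ)+1 = (l':ℕ)) {x y : Fin n} (hxy : x < y)
    (hne : ¬(x = l ∧ y = l')) : (Equiv.swap l l' x : Fin n) < Equiv.swap l l' y := by
  rw [Fin.lt_def] at hxy ⊢
  rw [val_swap, val_swap]
  by_cases hxl : x = l
  · rw [if_pos hxl]
    have hxv : (x:ℕ) = l := by rw [hxl]
    by_cases hyl : y = l
    · exfalso
      have hyv : (y:ℕ) = (l:ℕ) := by rw [hyl]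
      omega
    · rw [if_neg hyl]
      by_cases hyl' : y = l'
      · exact absurd ⟨hxl, hyl'⟩ hne
      · rw [if_neg hyl']
        have h5 : (y:ℕ) ≠ (l':ℕ) := fun h => hyl' (Fin.val_injective h)
        have h6 : (y:ℕ) ≠ (l:ℕ) := fun h => hyl (Fin.val_injective h)
        omega
  · rw [if_neg hxl]
    have hxv : (x:ℕ) ≠ l := fun h => hxl (Fin.val_injective h)
    by_cases hxl' : x = l'
    · rw [if_pos hxl']
      have hxv' : (x:ℕ) = l' := by rw [hxl']
      by_cases hyl : y = l
      · exfalso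
        have hyv : (y:ℕ) = (l:ℕ) := by rw [hyl]
        omega
      · rw [if_neg hyl]
        by_cases hyl' : y = l'
        · exfalso
          have hyv : (y:ℕ) = (l':ℕ) := by rw [hyl']
          omega
        · rw [if_neg hyl']
          have h6 : (y:ℕ) ≠ (l:ℕ) := fun h => hyl (Fin.val_injective h)
          omega
    · rw [if_neg hxl']
      have hxv' : (x:ℕ) ≠ l' := fun h => hxl' (Fin.val_injective h)
      by_cases hyl : y = l
      · rw [if_pos hyl]
        have h6 : (y:ℕ) = (l:ℕ) := by rw [hyl]
        omega
      · rw [if_neg hyl]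
        by_cases hyl' : y = l'
        · rw [if_pos hyl']
          have h6 : (y:ℕ) = (l':ℕ) := by rw [hyl']
          omega
        · rw [if_neg hyl']; omega

end helpers


/-- For smooth `w` with `sw < w < ws`: if `ws` is singular then no `z` covered
by `w` satisfies `zs < z`. -/
theorem stmt5 {n : ℕ} (w : Equiv.Perm (Fin n)) (hw : SmoothPerm w)
    (l : Fin n) (hl : (l : ℕ) + 1 < n)
    (s : Equiv.Perm (Fin n)) (hs : s = Equiv.swap l ⟨(l : ℕ) + 1, hl⟩)
    (h1 : BruhatLT (s * w) w) (h2 : BruhatLT w (w * s))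
    (hws : Has3412 (w * s) ∨ Has4231 (w * s)) :
    ¬ ∃ z : Equiv.Perm (Fin n),
      BruhatLE z w ∧ len z + 1 = len w ∧ BruhatLT (z * s) z := by
  subst hs
  rintro ⟨z, hzw, hlen, hzs⟩
  set l' : Fin n := ⟨(l:ℕ)+1, hl⟩ with hl'def
  have hlv : (l':ℕ) = (l:ℕ)+1 := rfl
  have hll : (l:ℕ) < (l':ℕ) := by omega
  have hln : l ≠ l' := vne (by omega)
  have p3412 : ∀ a b c d : Fin n, (a:ℕ) < b → (b:ℕ) < c → (c:ℕ) < d →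
      (w c:ℕ) < w d → (w d:ℕ) < w a → (w a:ℕ) < w b → False := by
    intro a b c d g1 g2 g3 g4 g5 g6
    exact hw.1 ⟨a, b, c, d, Fin.lt_def.mpr g1, Fin.lt_def.mpr g2, Fin.lt_def.mpr g3,
      Fin.lt_def.mpr g4, Fin.lt_def.mpr g5, Fin.lt_def.mpr g6⟩
  have p4231 : ∀ a b c d : Fin n, (a:ℕ) < b → (b:ℕ) < c → (c:ℕ) < d →
      (w d:ℕ) < w b → (w b:ℕ) < w c → (w c:ℕ) < w a → False := by
    intro a b c d g1 g2 g3 g4 g5 g6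
    exact hw.2 ⟨a, b, c, d, Fin.lt_def.mpr g1, Fin.lt_def.mpr g2, Fin.lt_def.mpr g3,
      Fin.lt_def.mpr g4, Fin.lt_def.mpr g5, Fin.lt_def.mpr g6⟩
  -- ascent of w at l
  have hasc : (w l:ℕ) < (w l':ℕ) := by
    have hne : (w l:ℕ) ≠ (w l':ℕ) := fin_ne_val (fun h => hln (w.injective h))
    by_contra hcon
    have hlt : (w l':ℕ) < (w l:ℕ) := by omega
    have hrk := rk_swap w l l' hll hlt ((l:ℕ)+1) ((w l':ℕ)+1)
    rw [if_pos (by refine ⟨?_, ?_, ?_, ?_⟩ <;> omega)] at hrk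
    have hb := h2.1 ((l:ℕ)+1) (by omega) ((w l':ℕ)+1) (by have := (w l').isLt; omega)
    omega
  -- descent of z at l
  have hdesc : (z l':ℕ) < (z l:ℕ) := by
    have hne : (z l:ℕ) ≠ (z l':ℕ) := fin_ne_val (fun h => hln (z.injective h))
    by_contra hcon
    have hlt : (z l:ℕ) < (z l':ℕ) := by omega
    have hul : (z * Equiv.swap l l') l = z l' := by
      rw [Equiv.Perm.mul_apply, Equiv.swap_apply_left]
    have hul' : (z * Equiv.swap l l') l' = z l := by
      rw [Equiv.Perm.mul_apply, Equiv.swap_apply_right]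
    have hvw' : (((z * Equiv.swap l l') l' : Fin n):ℕ) < (((z * Equiv.swap l l') l : Fin n):ℕ) := by
      rw [hul, hul']; exact hlt
    have hrk := rk_swap (z * Equiv.swap l l') l l' hll hvw' ((l:ℕ)+1)
      ((((z * Equiv.swap l l') l' : Fin n):ℕ)+1)
    rw [mul_assoc, Equiv.swap_mul_self, mul_one] at hrk
    rw [if_pos (by refine ⟨?_, ?_, ?_, ?_⟩ <;> omega)] at hrk
    have hb := hzs.1 ((l:ℕ)+1) (by omega) ((((z * Equiv.swap l l') l' : Fin n):ℕ)+1)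
      (by have := ((z * Equiv.swap l l') l').isLt; omega)
    omega
  -- cover decomposition of z
  obtain ⟨i, j, hij, hvw, hzeq, hmid⟩ := cover hzw hlen
  have hzl : z l = w (Equiv.swap i j l) := by rw [hzeq]; rfl
  have hzl' : z l' = w (Equiv.swap i j l') := by rw [hzeq]; rfl
  -- shape of the cover
  have hshape : (∃ i0 : Fin n, (i0:ℕ) < l ∧ (w l':ℕ) < w i0 ∧
        ∀ k : Fin n, (i0:ℕ) < k → (k:ℕ) < l → ¬((w l:ℕ) < w k ∧ (w k:ℕ) < w i0))
      ∨ (∃ j0 : Fin n, (l':ℕ) < j0 ∧ (w j0:ℕ) < w l ∧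
        ∀ k : Fin n, (l':ℕ) < k → (k:ℕ) < j0 → ¬((w j0:ℕ) < w k ∧ (w k:ℕ) < w l')) := by
    by_cases e1 : i = l
    · exfalso
      rw [e1] at hij hvw
      by_cases e2 : j = l'
      · rw [e2] at hvw; omega
      · have s1 : Equiv.swap l j l = j := Equiv.swap_apply_left _ _
        have s2 : Equiv.swap l j l' = l' :=
          Equiv.swap_apply_of_ne_of_ne hln.symm (fun h => e2 h.symm)
        rw [e1, s1] at hzl
        rw [e1, s2] at hzl'
        rw [hzl, hzl'] at hdesc
        omega
    · by_cases e2 : j = l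
      · -- shape A
        left
        rw [e2] at hij hvw hmid
        have s1 : Equiv.swap i l l = i := Equiv.swap_apply_right _ _
        have s2 : Equiv.swap i l l' = l' :=
          Equiv.swap_apply_of_ne_of_ne (vne (by omega)) (vne (by omega))
        rw [e2, s1] at hzl
        rw [e2, s2] at hzl'
        rw [hzl, hzl'] at hdesc
        exact ⟨i, hij, hdesc, hmid⟩
      · by_cases e3 : i = l'
        · -- shape B
          right
          rw [e3] at hij hvw hmid
          have s1 : Equiv.swap l' j l = l :=
            Equiv.swap_apply_of_ne_of_ne hln (vne (by omega))
          have s2 : Equiv.swap l' j l' = j := Equiv.swap_apply_left _ _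
          rw [e3, s1] at hzl
          rw [e3, s2] at hzl'
          rw [hzl, hzl'] at hdesc
          exact ⟨j, hij, hdesc, hmid⟩
        · by_cases e4 : j = l'
          · exfalso
            rw [e4] at hij hvw
            have hiv : (i:ℕ) ≠ (l:ℕ) := fun h => e1 (Fin.val_injective h)
            have s1 : Equiv.swap i l' l = l :=
              Equiv.swap_apply_of_ne_of_ne (fun h => e1 h.symm) hln
            have s2 : Equiv.swap i l' l' = i := Equiv.swap_apply_right _ _
            rw [e4, s1] at hzl
            rw [e4, s2] at hzl'
            rw [hzl, hzl'] at hdesc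
            omega
          · exfalso
            have s1 : Equiv.swap i j l = l :=
              Equiv.swap_apply_of_ne_of_ne (fun h => e1 h.symm) (fun h => e2 h.symm)
            have s2 : Equiv.swap i j l' = l' :=
              Equiv.swap_apply_of_ne_of_ne (fun h => e3 h.symm) (fun h => e4 h.symm)
            rw [s1] at hzl
            rw [s2] at hzl'
            rw [hzl, hzl'] at hdesc
            omega
  -- pattern transfer: ws singular gives configuration (I), (II) or (III)
  have htrans : (∃ a d : Fin n, (a:ℕ) < l ∧ (l':ℕ) < d ∧ (w l:ℕ) < w d ∧ (w d:ℕ) < w a ∧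
        (w a:ℕ) < w l')
      ∨ (∃ c d : Fin n, (l':ℕ) < c ∧ (c:ℕ) < d ∧ (w d:ℕ) < w l ∧ (w l:ℕ) < w c ∧
        (w c:ℕ) < w l')
      ∨ (∃ a b : Fin n, (a:ℕ) < b ∧ (b:ℕ) < l ∧ (w l:ℕ) < w b ∧ (w b:ℕ) < w l' ∧
        (w l':ℕ) < w a) := by
    rcases hws with ⟨a, b, c, d, hab, hbc, hcd, v1, v2, v3⟩ | ⟨a, b, c, d, hab, hbc, hcd, v1, v2, v3⟩
    · -- 3412 in ws
      simp only [Equiv.Perm.mul_apply] at v1 v2 v3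
      rw [Fin.lt_def] at hab hbc hcd v1 v2 v3
      by_cases hmidp : b = l ∧ c = l'
      · obtain ⟨hb, hc⟩ := hmidp
        left
        have hbv : (b:ℕ) = l := by rw [hb]
        have hcv : (c:ℕ) = l' := by rw [hc]
        have sa : Equiv.swap l l' a = a :=
          Equiv.swap_apply_of_ne_of_ne (vne (by omega)) (vne (by omega))
        have sd : Equiv.swap l l' d = d :=
          Equiv.swap_apply_of_ne_of_ne (vne (by omega)) (vne (by omega))
        have sb : Equiv.swap l l' b = l' := by rw [hb]; exact Equiv.swap_apply_left _ _
        have sc : Equiv.swap l l' c = l := by rw [hc]; exact Equiv.swap_apply_right _ _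
        rw [sc, sd] at v1
        rw [sd, sa] at v2
        rw [sa, sb] at v3
        exact ⟨a, d, by omega, by omega, v1, v2, v3⟩
      · by_cases hp1 : a = l ∧ b = l'
        · exfalso
          obtain ⟨ha, hb⟩ := hp1
          rw [ha, hb, Equiv.swap_apply_left, Equiv.swap_apply_right] at v3
          omega
        · by_cases hp2 : c = l ∧ d = l'
          · exfalso
            obtain ⟨hc, hd⟩ := hp2
            rw [hc, hd, Equiv.swap_apply_left, Equiv.swap_apply_right] at v1
            omega
          · exfalso
            refine p3412 (Equiv.swap l l' a) (Equiv.swap l l' b) (Equiv.swap l l' c)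
              (Equiv.swap l l' d) ?_ ?_ ?_ v1 v2 v3
            · exact Fin.lt_def.mp (swap_mono hlv.symm (Fin.lt_def.mpr hab) hp1)
            · exact Fin.lt_def.mp (swap_mono hlv.symm (Fin.lt_def.mpr hbc) hmidp)
            · exact Fin.lt_def.mp (swap_mono hlv.symm (Fin.lt_def.mpr hcd) hp2)
    · -- 4231 in ws
      simp only [Equiv.Perm.mul_apply] at v1 v2 v3
      rw [Fin.lt_def] at hab hbc hcd v1 v2 v3
      by_cases hp1 : a = l ∧ b = l'
      · obtain ⟨ha, hb⟩ := hp1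
        right; left
        have hav : (a:ℕ) = l := by rw [ha]
        have hbv : (b:ℕ) = l' := by rw [hb]
        have sc : Equiv.swap l l' c = c :=
          Equiv.swap_apply_of_ne_of_ne (vne (by omega)) (vne (by omega))
        have sd : Equiv.swap l l' d = d :=
          Equiv.swap_apply_of_ne_of_ne (vne (by omega)) (vne (by omega))
        have sa : Equiv.swap l l' a = l' := by rw [ha]; exact Equiv.swap_apply_left _ _
        have sb : Equiv.swap l l' b = l := by rw [hb]; exact Equiv.swap_apply_right _ _
        rw [sd, sb] at v1
        rw [sb, sc] at v2
        rw [sc, sa] at v3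
        exact ⟨c, d, by omega, by omega, v1, v2, v3⟩
      · by_cases hmidp : b = l ∧ c = l'
        · exfalso
          obtain ⟨hb, hc⟩ := hmidp
          rw [hb, hc, Equiv.swap_apply_left, Equiv.swap_apply_right] at v2
          omega
        · by_cases hp2 : c = l ∧ d = l'
          · obtain ⟨hc, hd⟩ := hp2
            right; right
            have hcv : (c:ℕ) = l := by rw [hc]
            have hdv : (d:ℕ) = l' := by rw [hd]
            have sa : Equiv.swap l l' a = a :=
              Equiv.swap_apply_of_ne_of_ne (vne (by omega)) (vne (by omega))
            have sb : Equiv.swap l l' b = b :=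
              Equiv.swap_apply_of_ne_of_ne (vne (by omega)) (vne (by omega))
            have sc : Equiv.swap l l' c = l' := by rw [hc]; exact Equiv.swap_apply_left _ _
            have sd : Equiv.swap l l' d = l := by rw [hd]; exact Equiv.swap_apply_right _ _
            rw [sd, sb] at v1
            rw [sb, sc] at v2
            rw [sc, sa] at v3
            exact ⟨a, b, by omega, by omega, v1, v2, v3⟩
          · exfalso
            refine p4231 (Equiv.swap l l' a) (Equiv.swap l l' b) (Equiv.swap l l' c)
              (Equiv.swap l l' d) ?_ ?_ ?_ v1 v2 v3
            · exact Fin.lt_def.mp (swap_mono hlv.symm (Fin.lt_def.mpr hab) hp1)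
            · exact Fin.lt_def.mp (swap_mono hlv.symm (Fin.lt_def.mpr hbc) hmidp)
            · exact Fin.lt_def.mp (swap_mono hlv.symm (Fin.lt_def.mpr hcd) hp2)
  -- final case analysis
  rcases hshape with ⟨i0, hi0l, hi0v, midA⟩ | ⟨j0, hj0l, hj0v, midB⟩
  · rcases htrans with ⟨a0, d0, ha0, hd0, t1, t2, t3⟩ | ⟨c0, d0, q1, q2, t1, t2, t3⟩ |
      ⟨a0, b0, q1, q2, t1, t2, t3⟩
    · rcases lt_trichotomy (a0:ℕ) (i0:ℕ) with h | h | h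
      · exact p3412 a0 i0 l d0 h hi0l (by omega) t1 t2 (by omega)
      · have he : a0 = i0 := Fin.val_injective h
        rw [he] at t3
        omega
      · exact midA a0 h ha0 ⟨by omega, by omega⟩
    · exact p4231 i0 l c0 d0 hi0l (by omega) q2 t1 t2 (by omega)
    · rcases lt_trichotomy (b0:ℕ) (i0:ℕ) with h | h | h
      · rcases lt_trichotomy ((w a0:ℕ)) ((w i0:ℕ)) with hh | hh | hh
        · exact p3412 a0 i0 l l' (by omega) hi0l (by omega) hasc t3 hh
        · have he : a0 = i0 := w.injective (Fin.val_injective hh)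
          have := congrArg Fin.val he
          omega
        · exact p4231 a0 b0 i0 l q1 h hi0l t1 (by omega) hh
      · have he : b0 = i0 := Fin.val_injective h
        rw [he] at t2
        omega
      · exact midA b0 h q2 ⟨t1, by omega⟩
  · rcases htrans with ⟨a0, d0, ha0, hd0, t1, t2, t3⟩ | ⟨c0, d0, q1, q2, t1, t2, t3⟩ |
      ⟨a0, b0, q1, q2, t1, t2, t3⟩
    · rcases lt_trichotomy (d0:ℕ) (j0:ℕ) with h | h | h
      · exact midB d0 hd0 h ⟨by omega, by omega⟩
      · have he : d0 = j0 := Fin.val_injective h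
        rw [he] at t1
        omega
      · exact p3412 a0 l' j0 d0 (by omega) hj0l h (by omega) t2 t3
    · rcases lt_trichotomy (c0:ℕ) (j0:ℕ) with h | h | h
      · exact midB c0 q1 h ⟨by omega, t3⟩
      · have he : c0 = j0 := Fin.val_injective h
        rw [he] at t2
        omega
      · rcases lt_trichotomy ((w d0:ℕ)) ((w j0:ℕ)) with hh | hh | hh
        · exact p4231 l' j0 c0 d0 hj0l h q2 hh (by omega) t3
        · have he : d0 = j0 := w.injective (Fin.val_injective hh)
          have := congrArg Fin.val he
          omega
        · exact p3412 l l' j0 d0 (by omega) hj0l (by omega) hh t1 hasc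
    · exact p4231 a0 b0 l' j0 q1 (by omega) hj0l (by omega) t2 t3
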